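/- Let P be a finite connected poset, let I ⊆ P with I ◎ P, and let J ⊆ P \ I. Then J ◎ (P \ I) (for the induced order on P \ I) if and only if J ◎ P. -/

import Mathlib

open scoped Classical

/-- A finite poset on a subset (`carrier`) of an ambient type `α`. -/
structure FinPoset (α : Type*) where
  carrier : Finset α
  le : α → α → Prop
  mem_of_le : ∀ ⦃x y⦄, le x y → x ∈ carrier ∧ y ∈ carrier
  le_refl : ∀ x ∈ carrier, le x x
  le_trans : ∀ ⦃x y z⦄, le x y → le y z → le x z
  le_antisymm : ∀ ⦃x y⦄, le x y → le y x → x = y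

namespace FinPoset

variable {α : Type*} [DecidableEq α]

/-- The strict order `x <_P y`. -/
def lt (P : FinPoset α) (x y : α) : Prop := P.le x y ∧ x ≠ y

/-- `min(P)`: the set of minimal elements of `P`. -/
noncomputable def minSet (P : FinPoset α) : Finset α :=
  P.carrier.filter (fun x => ∀ y, P.le y x → y = x)

/-- Connectivity of a subset `S`, for the graph with edges between comparable pairs. -/
def ConnOn (P : FinPoset α) (S : Set α) : Prop :=
  ∀ x ∈ S, ∀ y ∈ S,
    Relation.ReflTransGen (fun a b => a ∈ S ∧ b ∈ S ∧ (P.le a b ∨ P.le b a)) x y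

/-- A finite poset is connected if it is nonempty and any two elements are linked by a
chain of comparable pairs. -/
def Connected (P : FinPoset α) : Prop :=
  P.carrier.Nonempty ∧ P.ConnOn ↑P.carrier

/-- `I` is a connected component of `S` (for the comparability graph of `P`). -/
def IsCC (P : FinPoset α) (S I : Set α) : Prop :=
  I.Nonempty ∧ I ⊆ S ∧ P.ConnOn I ∧
    ∀ x ∈ I, ∀ y ∈ S, (P.le x y ∨ P.le y x) → y ∈ I

/-- `I_- = {x ∈ P \ I : ∃ y ∈ I, x ≤_P y}`. -/
noncomputable def below (P : FinPoset α) (I : Finset α) : Finset α :=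
  (P.carrier \ I).filter (fun x => ∃ y ∈ I, P.le x y)

/-- `I ◎ P` : `I_-` is a singleton `{w}` with `w ∈ min(P)`, and `I` is a connected
component of `{x ∈ P : w <_P x}`. -/
def Circ (P : FinPoset α) (I : Finset α) : Prop :=
  ∃ w, P.below I = {w} ∧ w ∈ P.minSet ∧
    P.IsCC {x | x ∈ P.carrier ∧ P.lt w x} ↑I

/-- The induced poset on a subset `S`. -/
def restrict (P : FinPoset α) (S : Finset α) : FinPoset α where
  carrier := P.carrier ∩ S
  le x y := P.le x y ∧ x ∈ S ∧ y ∈ S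
  mem_of_le := by
    intro x y h
    rcases P.mem_of_le h.1 with ⟨hx, hy⟩
    exact ⟨Finset.mem_inter.2 ⟨hx, h.2.1⟩, Finset.mem_inter.2 ⟨hy, h.2.2⟩⟩
  le_refl := by
    intro x hx
    rcases Finset.mem_inter.1 hx with ⟨h1, h2⟩
    exact ⟨P.le_refl x h1, h2, h2⟩
  le_trans := by
    rintro x y z ⟨h1, hx, hy⟩ ⟨h2, _, hz⟩
    exact ⟨P.le_trans h1 h2, hx, hz⟩
  le_antisymm := by
    rintro x y ⟨h1, _, _⟩ ⟨h2, _, _⟩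
    exact P.le_antisymm h1 h2

/-- The grafting `P ↘_v Q` of `P` above the vertex `v` of `Q` (auxiliary version, with
the disjointness hypotheses as arguments). -/
def graftAux (P Q : FinPoset α) (v : α) (hd : Disjoint P.carrier Q.carrier)
    (hv : v ∈ Q.carrier) : FinPoset α where
  carrier := P.carrier ∪ Q.carrier
  le x y := P.le x y ∨ Q.le x y ∨ (Q.le x v ∧ y ∈ P.carrier)
  mem_of_le := by
    rintro x y (h | h | ⟨h1, h2⟩)
    · rcases P.mem_of_le h with ⟨hx, hy⟩
      exact ⟨Finset.mem_union_left _ hx, Finset.mem_union_left _ hy⟩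
    · rcases Q.mem_of_le h with ⟨hx, hy⟩
      exact ⟨Finset.mem_union_right _ hx, Finset.mem_union_right _ hy⟩
    · exact ⟨Finset.mem_union_right _ (Q.mem_of_le h1).1, Finset.mem_union_left _ h2⟩
  le_refl := by
    intro x hx
    rcases Finset.mem_union.1 hx with h | h
    · exact Or.inl (P.le_refl x h)
    · exact Or.inr (Or.inl (Q.le_refl x h))
  le_trans := by
    rintro x y z (h1 | h1 | ⟨h1, h1'⟩) (h2 | h2 | ⟨h2, h2'⟩)
    · exact Or.inl (P.le_trans h1 h2)
    · exact absurd (Q.mem_of_le h2).1 (Finset.disjoint_left.1 hd (P.mem_of_le h1).2)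
    · exact absurd (Q.mem_of_le h2).1 (Finset.disjoint_left.1 hd (P.mem_of_le h1).2)
    · exact absurd (P.mem_of_le h2).1 (Finset.disjoint_right.1 hd (Q.mem_of_le h1).2)
    · exact Or.inr (Or.inl (Q.le_trans h1 h2))
    · exact Or.inr (Or.inr ⟨Q.le_trans h1 h2, h2'⟩)
    · exact Or.inr (Or.inr ⟨h1, (P.mem_of_le h2).2⟩)
    · exact absurd (Q.mem_of_le h2).1 (Finset.disjoint_left.1 hd h1')
    · exact absurd (Q.mem_of_le h2).1 (Finset.disjoint_left.1 hd h1')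
  le_antisymm := by
    rintro x y (h1 | h1 | ⟨h1, h1'⟩) (h2 | h2 | ⟨h2, h2'⟩)
    · exact P.le_antisymm h1 h2
    · exact absurd (Q.mem_of_le h2).1 (Finset.disjoint_left.1 hd (P.mem_of_le h1).2)
    · exact absurd (Q.mem_of_le h2).1 (Finset.disjoint_left.1 hd (P.mem_of_le h1).2)
    · exact absurd (P.mem_of_le h2).1 (Finset.disjoint_right.1 hd (Q.mem_of_le h1).2)
    · exact Q.le_antisymm h1 h2
    · exact absurd (Q.mem_of_le h1).1 (Finset.disjoint_left.1 hd h2')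
    · exact absurd (P.mem_of_le h2).2 (Finset.disjoint_right.1 hd (Q.mem_of_le h1).1)
    · exact absurd (Q.mem_of_le h2).1 (Finset.disjoint_left.1 hd h1')
    · exact absurd (Q.mem_of_le h1).1 (Finset.disjoint_left.1 hd h2')
  
/-- The grafting `P ↘_v Q` of `P` above the vertex `v` of `Q`: the poset on
`X₁ ⊔ X₂` restricting to `P` on `X₁` and to `Q` on `X₂`, with `q ≤ p` for `q ∈ X₂`,
`p ∈ X₁` iff `q ≤_Q v`.  (Junk value when the carriers are not disjoint or `v ∉ Q`.) -/
noncomputable def graft (P Q : FinPoset α) (v : α) : FinPoset α :=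
  if h : Disjoint P.carrier Q.carrier ∧ v ∈ Q.carrier then P.graftAux Q v h.1 h.2 else P

/-- The set of subsets `I` of the carrier with `I ◎ P`. -/
noncomputable def circSet (P : FinPoset α) : Finset (Finset α) :=
  P.carrier.powerset.filter (fun I => P.Circ I)

/-- Order isomorphisms from `A` to `B`, encoded as maps `α → α` that are the identity
outside of the carrier of `A`. -/
def Isos (A B : FinPoset α) : Set (α → α) :=
  {f | Set.BijOn f ↑A.carrier ↑B.carrier ∧
    (∀ x ∈ A.carrier, ∀ y ∈ A.carrier, (A.le x y ↔ B.le (f x) (f y))) ∧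
    ∀ x, x ∉ A.carrier → f x = x}

/-- `⟨A, B⟩`: the number of order isomorphisms from `A` to `B`. -/
noncomputable def pairing (A B : FinPoset α) : ℕ := Nat.card ↥(Isos A B)

/-- The NAP coproduct `δ(P) = (1/|min(P)|) Σ_{I ◎ P} I ⊗ (P \ I)`, with values in the
rational vector space spanned by pairs of finite posets. -/
noncomputable def delta (P : FinPoset α) : (FinPoset α × FinPoset α) →₀ ℚ :=
  ((P.minSet.card : ℚ))⁻¹ • ∑ I ∈ P.circSet,
    Finsupp.single (P.restrict I, P.restrict (P.carrier \ I)) (1 : ℚ)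

end FinPoset

/-- If `P` is a finite connected poset, `I ◎ P` and `J ⊆ P \ I`, then
`J ◎ (P \ I)` (for the induced order) if and only if `J ◎ P`. -/
theorem circ_sdiff_iff {α : Type*} [DecidableEq α] (P : FinPoset α)
    (hP : P.Connected) (I J : Finset α) (hI : I ⊆ P.carrier) (hIc : P.Circ I)
    (hJ : J ⊆ P.carrier \ I) :
    (P.restrict (P.carrier \ I)).Circ J ↔ P.Circ J := by
  classical
  obtain ⟨w, hwb, hwmin, hwcc⟩ := hIc
  have hwmin' : ∀ y, P.le y w → y = w := (Finset.mem_filter.1 hwmin).2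
  -- I is an up-set
  have hup : ∀ y ∈ I, ∀ x, P.le y x → x ∈ I := by
    intro y hy x hle
    have hyS : y ∈ {z | z ∈ P.carrier ∧ P.lt w z} := hwcc.2.1 (Finset.mem_coe.2 hy)
    by_cases hxy : x = y
    · exact hxy ▸ hy
    have hwx : P.le w x := P.le_trans hyS.2.1 hle
    have hwnx : w ≠ x := by
      intro h
      subst h
      exact hyS.2.2 (P.le_antisymm hyS.2.1 hle)
    exact Finset.mem_coe.1
      (hwcc.2.2.2 y (Finset.mem_coe.2 hy) x ⟨(P.mem_of_le hle).2, hwx, hwnx⟩ (Or.inl hle))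
  -- P.carrier \ I is a down-set
  have hdown : ∀ ⦃x y : α⦄, P.le x y → y ∉ I → x ∈ P.carrier \ I := by
    intro x y hle hyI
    refine Finset.mem_sdiff.2 ⟨(P.mem_of_le hle).1, fun hxI => hyI (hup x hxI y hle)⟩
  set P' := P.restrict (P.carrier \ I) with hP'
  have hcar : P'.carrier = P.carrier \ I := by
    simp only [hP', FinPoset.restrict]
    exact Finset.inter_eq_right.2 Finset.sdiff_subset
  have hle' : ∀ {x y : α}, P'.le x y ↔
      (P.le x y ∧ x ∈ P.carrier \ I ∧ y ∈ P.carrier \ I) := by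
    intro x y; rfl
  have hbelow : P'.below J = P.below J := by
    ext x
    simp only [FinPoset.below, Finset.mem_filter, Finset.mem_sdiff, hcar, hle']
    constructor
    · rintro ⟨⟨⟨hx, hxI⟩, hxJ⟩, y, hy, hley, _, _⟩
      exact ⟨⟨hx, hxJ⟩, y, hy, hley⟩
    · rintro ⟨⟨hx, hxJ⟩, y, hy, hley⟩
      have hyS : y ∈ P.carrier \ I := hJ hy
      have hxS : x ∈ P.carrier \ I := hdown hley (Finset.mem_sdiff.1 hyS).2
      exact ⟨⟨⟨hx, (Finset.mem_sdiff.1 hxS).2⟩, hxJ⟩, y, hy, hley, Finset.mem_sdiff.1 hxS, Finset.mem_sdiff.1 hyS⟩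
  constructor
  · rintro ⟨v, hv1, hv2, hv3⟩
    have hvmem : v ∈ P'.below J := by rw [hv1]; exact Finset.mem_singleton_self v
    have hvS : v ∈ P.carrier \ I := by
      have := (Finset.mem_sdiff.1 (Finset.mem_filter.1 hvmem).1).1
      rwa [hcar] at this
    have hJT : ∀ x ∈ J, x ∈ P.carrier ∧ P.lt v x ∧ x ∈ P.carrier \ I := by
      intro x hx
      have hxT : x ∈ {z | z ∈ P'.carrier ∧ P'.lt v z} := hv3.2.1 (Finset.mem_coe.2 hx)
      have hxle := hle'.1 hxT.2.1
      exact ⟨(Finset.mem_sdiff.1 hxle.2.2).1, ⟨hxle.1, hxT.2.2⟩, hxle.2.2⟩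
    refine ⟨v, by rw [← hbelow]; exact hv1, ?_, ?_, ?_, ?_, ?_⟩
    · -- v ∈ P.minSet
      refine Finset.mem_filter.2 ⟨(Finset.mem_sdiff.1 hvS).1, fun y hy => ?_⟩
      have hyS : y ∈ P.carrier \ I := hdown hy (Finset.mem_sdiff.1 hvS).2
      exact (Finset.mem_filter.1 hv2).2 y (hle'.2 ⟨hy, hyS, hvS⟩)
    · exact hv3.1
    · intro x hx
      obtain ⟨h1, h2, _⟩ := hJT x (Finset.mem_coe.1 hx)
      exact ⟨h1, h2⟩
    · intro x hx y hy
      refine Relation.ReflTransGen.mono ?_ x y (hv3.2.2.1 x hx y hy)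
      rintro a b ⟨ha, hb, hc⟩
      exact ⟨ha, hb, hc.imp (fun h => (hle'.1 h).1) (fun h => (hle'.1 h).1)⟩
    · -- closure
      intro x hx y hy hcomp
      obtain ⟨hxP, hxlt, hxS⟩ := hJT x (Finset.mem_coe.1 hx)
      have hyI : y ∉ I := by
        intro hyI
        rcases hcomp with h | h
        · -- x ≤ y ∈ I, so x ∈ below I, so x = w
          have hxb : x ∈ P.below I := Finset.mem_filter.2
            ⟨Finset.mem_sdiff.2 ⟨hxP, (Finset.mem_sdiff.1 hxS).2⟩, y, hyI, h⟩
          rw [hwb, Finset.mem_singleton] at hxb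
          subst hxb
          exact hxlt.2 (hwmin' v hxlt.1)
        · exact (Finset.mem_sdiff.1 hxS).2 (hup y hyI x h)
      have hyS : y ∈ P.carrier \ I := Finset.mem_sdiff.2 ⟨hy.1, hyI⟩
      have hyT' : y ∈ {z | z ∈ P'.carrier ∧ P'.lt v z} := by
        refine ⟨by rw [hcar]; exact hyS, hle'.2 ⟨hy.2.1, hvS, hyS⟩, hy.2.2⟩
      refine hv3.2.2.2 x hx y hyT' (hcomp.imp ?_ ?_)
      · exact fun h => hle'.2 ⟨h, hxS, hyS⟩
      · exact fun h => hle'.2 ⟨h, hyS, hxS⟩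
  · rintro ⟨v, hv1, hv2, hv3⟩
    have hvmem : v ∈ P.below J := by rw [hv1]; exact Finset.mem_singleton_self v
    obtain ⟨hvm, y0, hy0, hvy0⟩ := Finset.mem_filter.1 hvmem
    have hvS : v ∈ P.carrier \ I := hdown hvy0 (Finset.mem_sdiff.1 (hJ hy0)).2
    have hJS : ∀ x ∈ J, x ∈ P.carrier \ I := fun x hx => hJ hx
    refine ⟨v, by rw [hbelow]; exact hv1, ?_, ?_, ?_, ?_, ?_⟩
    · refine Finset.mem_filter.2 ⟨by rw [hcar]; exact hvS, fun y hy => ?_⟩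
      exact (Finset.mem_filter.1 hv2).2 y (hle'.1 hy).1
    · exact hv3.1
    · intro x hx
      have hxT := hv3.2.1 hx
      have hxS := hJS x (Finset.mem_coe.1 hx)
      exact ⟨by rw [hcar]; exact hxS, hle'.2 ⟨hxT.2.1, hvS, hxS⟩, hxT.2.2⟩
    · intro x hx y hy
      refine Relation.ReflTransGen.mono ?_ x y (hv3.2.2.1 x hx y hy)
      rintro a b ⟨ha, hb, hc⟩
      have haS := hJS a (Finset.mem_coe.1 ha)
      have hbS := hJS b (Finset.mem_coe.1 hb)
      exact ⟨ha, hb, hc.imp (fun h => hle'.2 ⟨h, haS, hbS⟩) (fun h => hle'.2 ⟨h, hbS, haS⟩)⟩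
    · intro x hx y hy hcomp
      have hyS : y ∈ P.carrier \ I := by have := hy.1; rwa [hcar] at this
      have hyT : y ∈ {z | z ∈ P.carrier ∧ P.lt v z} :=
        ⟨(Finset.mem_sdiff.1 hyS).1, (hle'.1 hy.2.1).1, hy.2.2⟩
      exact hv3.2.2.2 x hx y hyT (hcomp.imp (fun h => (hle'.1 h).1) (fun h => (hle'.1 h).1))
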